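/- In the twisted Heisenberg-Virasoro Verma module with c_I = 0, c_{L,I} ≠ 0 and h_I = 0 (so p = 1), the vector Λ = (L(-1) + (h/c_{L,I})·I(-1))·v is a singular vector: L(n)Λ = I(n)Λ = 0 for all n ≥ 1. -/
import Mathlib


/-- A representation of the twisted Heisenberg-Virasoro algebra `HVir` at level zero
(`C_I` acts by `0`), with the central elements `C_L`, `C_{LI}` acting by the scalars
`cL`, `cLI`. -/
structure HVirRep (V : Type*) [AddCommGroup V] [Module ℂ V] where
  L : ℤ → Module.End ℂ V
  I : ℤ → Module.End ℂ V
  cL : ℂ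
  cLI : ℂ
  rel_LL : ∀ n m : ℤ, L n * L m - L m * L n =
    ((n : ℂ) - m) • L (n + m) +
      (if n + m = 0 then (((n : ℂ) ^ 3 - n) / 12) * cL else 0) • (1 : Module.End ℂ V)
  rel_LI : ∀ n m : ℤ, L n * I m - I m * L n =
    (-(m : ℂ)) • I (n + m) -
      (if n + m = 0 then ((n : ℂ) ^ 2 + n) * cLI else 0) • (1 : Module.End ℂ V)
  rel_II : ∀ n m : ℤ, I n * I m = I m * I n

/-- In any highest weight representation of the twisted Heisenberg-Virasoro algebra at
level zero with `c_{L,I} ≠ 0` and highest weight `(h, h_I) = (h, 0)` (so `p = 1`), the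
vector `Λ = (L(-1) + (h/c_{L,I}) I(-1)) v` is a singular vector:
`L(n)Λ = I(n)Λ = 0` for all `n ≥ 1`. -/
theorem singular_vector_p_one {V : Type*} [AddCommGroup V] [Module ℂ V]
    (ρ : HVirRep V) (v : V) (h : ℂ) (hc : ρ.cLI ≠ 0)
    (hLv : ∀ n : ℤ, 0 < n → ρ.L n v = 0) (hIv : ∀ n : ℤ, 0 < n → ρ.I n v = 0)
    (hL0 : ρ.L 0 v = h • v) (hI0 : ρ.I 0 v = 0) :
    ∀ n : ℤ, 1 ≤ n →
      ρ.L n (ρ.L (-1) v + (h / ρ.cLI) • ρ.I (-1) v) = 0 ∧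
      ρ.I n (ρ.L (-1) v + (h / ρ.cLI) • ρ.I (-1) v) = 0 := by
  intro n hn
  have hn0 : (0:ℤ) < n := hn
  have hLL := LinearMap.congr_fun (ρ.rel_LL n (-1)) v
  have hLI := LinearMap.congr_fun (ρ.rel_LI n (-1)) v
  have hIL := LinearMap.congr_fun (ρ.rel_LI (-1) n) v
  have hII := LinearMap.congr_fun (ρ.rel_II n (-1)) v
  simp only [LinearMap.sub_apply, LinearMap.add_apply, LinearMap.smul_apply,
    Module.End.mul_apply, Module.End.one_apply] at hLL hLI hIL hII
  simp only [hLv n hn0, hIv n hn0] at hLL hLI hIL hII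
  simp only [map_zero, sub_zero, zero_sub] at hLL hLI hIL hII
  rcases eq_or_lt_of_le hn with h1 | h2
  · -- n = 1
    subst h1
    norm_num at hLL hLI hIL hII
    rw [hL0] at hLL
    rw [hI0] at hLI hIL
    constructor
    · rw [map_add, map_smul, hLL, hLI, smul_sub, smul_zero, zero_sub, smul_smul, smul_smul,
        ← neg_smul, ← add_smul]
      convert zero_smul ℂ v using 2
      field_simp
      ring
    · rw [map_add, map_smul, hIL, hII, smul_zero, add_zero]
  · -- n ≥ 2
    have hn1 : (0:ℤ) < n - 1 := by omega
    have hne : ¬ (n + -1 = 0) := by omega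
    have hne' : ¬ (-1 + n = 0) := by omega
    rw [if_neg hne] at hLL hLI
    rw [if_neg hne'] at hIL
    rw [show (-1:ℤ) + n = n - 1 by ring] at hIL
    rw [show n + -1 = n - 1 from rfl] at hLL hLI
    rw [hLv (n-1) hn1] at hLL
    rw [hIv (n-1) hn1] at hLI hIL
    simp only [smul_zero, zero_smul, add_zero, zero_sub, sub_zero, neg_zero,
      neg_eq_zero] at hLL hLI hIL
    constructor
    · rw [map_add, map_smul, hLL, hLI, smul_zero, add_zero]
    · rw [map_add, map_smul, hIL, hII, smul_zero, add_zero]
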